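/- Let X be a finite set, let τ₀, τ₁, τ₂ be fixed-point-free involutive permutations of X, and let p, q, r, s ∈ X be pairwise distinct with τ₀(p) = s, τ₀(q) = r, τ₂(p) = q and τ₂(r) = s. Then the subgroup of the permutation group of X generated by τ₀ ∘ κ, τ₁ and τ₂ ∘ κ, where κ = τ₀ᵉ ∘ τ₂ᵉ, has exactly the same orbits on X as the subgroup generated by τ₀, τ₁ and τ₂. In particular, partial duality relative to an edge preserves the number of connected components of a (possibly non-orientable) ribbon graph. (Lemma 2.3(f) expressed via bi-rotation systems.) -/
import Mathlib


/-- `τ₀ᵉ`, the permutation swapping the flags `p ↔ s` and `q ↔ r` of an edge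
(with `τ₀ p = s` and `τ₀ q = r`) and fixing all other flags. -/

theorem orbit_closure_subset_aux {G : Type*} [Group G] {X : Type*} [MulAction G X]
    {S : Set G} (H : Subgroup G)
    (h : ∀ g ∈ S, ∀ z : X, g • z ∈ MulAction.orbit H z) (x : X) :
    MulAction.orbit (Subgroup.closure S) x ⊆ MulAction.orbit H x := by
  have key : ∀ g ∈ Subgroup.closure S, ∀ z : X,
      g • z ∈ MulAction.orbit H z ∧ g⁻¹ • z ∈ MulAction.orbit H z := by
    intro g hg
    induction hg using Subgroup.closure_induction with
    | mem g hgS =>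
      intro z
      refine ⟨h g hgS z, ?_⟩
      have h2 := h g hgS (g⁻¹ • z)
      rw [smul_inv_smul] at h2
      rw [MulAction.orbit_eq_iff.mpr h2]
      exact MulAction.mem_orbit_self _
    | one => intro z; simp only [one_smul, inv_one]; exact ⟨MulAction.mem_orbit_self z, MulAction.mem_orbit_self z⟩
    | mul a b ha hb iha ihb =>
      intro z
      constructor
      · rw [mul_smul]
        rw [← MulAction.orbit_eq_iff.mpr ((ihb z).1)]
        exact (iha (b • z)).1
      · rw [mul_inv_rev, mul_smul]
        rw [← MulAction.orbit_eq_iff.mpr ((iha z).2)]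
        exact (ihb (a⁻¹ • z)).2
    | inv a ha iha =>
      intro z
      exact ⟨(iha z).2, by simpa using (iha z).1⟩
  rintro y ⟨⟨g, hg⟩, rfl⟩
  exact (key g hg x).1

def tau0e {X : Type*} [DecidableEq X] (p q r s : X) : Equiv.Perm X :=
  Equiv.swap p s * Equiv.swap q r

/-- `τ₂ᵉ`, the permutation swapping the flags `p ↔ q` and `r ↔ s` of an edge
(with `τ₂ p = q` and `τ₂ r = s`) and fixing all other flags. -/
def tau2e {X : Type*} [DecidableEq X] (p q r s : X) : Equiv.Perm X :=
  Equiv.swap p q * Equiv.swap r s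

/-- `κ := τ₀ᵉ ∘ τ₂ᵉ`, the permutation used in the partial-dual construction for
bi-rotation systems: the partial dual of `(τ₀, τ₁, τ₂)` relative to the edge `e`
with flags `p, q, r, s` is `(τ₀ ∘ κ, τ₁, τ₂ ∘ κ)`. -/
def kappaE {X : Type*} [DecidableEq X] (p q r s : X) : Equiv.Perm X :=
  tau0e p q r s * tau2e p q r s

/-- **Lemma 2.3(f) via bi-rotation systems.**  Let `(τ₀, τ₁, τ₂)` be a bi-rotation
system on the finite set `X` of local flags and let `p, q, r, s` be the four
pairwise distinct flags of an edge `e` (`τ₀ p = s`, `τ₀ q = r`, `τ₂ p = q`,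
`τ₂ r = s`).  Then the subgroup generated by `τ₀ ∘ κ`, `τ₁` and `τ₂ ∘ κ`, with
`κ = τ₀ᵉ ∘ τ₂ᵉ`, has exactly the same orbits on `X` as the subgroup generated by
`τ₀`, `τ₁` and `τ₂`; in particular partial duality relative to an edge preserves the
number of connected components of a (possibly non-orientable) ribbon graph. -/
theorem partial_dual_birotation_orbits {X : Type*} [Fintype X] [DecidableEq X]
    (τ₀ τ₁ τ₂ : Equiv.Perm X)
    (h0inv : ∀ x, τ₀ (τ₀ x) = x) (h0fp : ∀ x, τ₀ x ≠ x)
    (h1inv : ∀ x, τ₁ (τ₁ x) = x) (h1fp : ∀ x, τ₁ x ≠ x)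
    (h2inv : ∀ x, τ₂ (τ₂ x) = x) (h2fp : ∀ x, τ₂ x ≠ x)
    (p q r s : X)
    (hpq : p ≠ q) (hpr : p ≠ r) (hps : p ≠ s) (hqr : q ≠ r) (hqs : q ≠ s) (hrs : r ≠ s)
    (e0p : τ₀ p = s) (e0q : τ₀ q = r) (e2p : τ₂ p = q) (e2r : τ₂ r = s) :
    ∀ x : X,
      MulAction.orbit (Subgroup.closure
          {τ₀ * kappaE p q r s, τ₁, τ₂ * kappaE p q r s} : Subgroup (Equiv.Perm X)) x =
        MulAction.orbit (Subgroup.closure {τ₀, τ₁, τ₂} : Subgroup (Equiv.Perm X)) x := by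
  intro x
  set κ := kappaE p q r s with hκ
  have t0r : τ₀ r = q := by rw [← e0q, h0inv]
  have t0s : τ₀ s = p := by rw [← e0p, h0inv]
  have t2q : τ₂ q = p := by rw [← e2p, h2inv]
  have t2s : τ₂ s = r := by rw [← e2r, h2inv]
  have kp : κ p = r := by
    simp only [hκ, kappaE, tau0e, tau2e, Equiv.Perm.mul_apply]
    rw [Equiv.swap_apply_of_ne_of_ne hpr hps, Equiv.swap_apply_left,
      Equiv.swap_apply_left, Equiv.swap_apply_of_ne_of_ne hpr.symm hrs]
  have kq : κ q = s := by
    simp only [hκ, kappaE, tau0e, tau2e, Equiv.Perm.mul_apply]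
    rw [Equiv.swap_apply_of_ne_of_ne hqr hqs, Equiv.swap_apply_right,
      Equiv.swap_apply_of_ne_of_ne hpq hpr, Equiv.swap_apply_left]
  have kr : κ r = p := by
    simp only [hκ, kappaE, tau0e, tau2e, Equiv.Perm.mul_apply]
    rw [Equiv.swap_apply_left, Equiv.swap_apply_of_ne_of_ne hps.symm hqs.symm,
      Equiv.swap_apply_of_ne_of_ne hqs.symm hrs.symm, Equiv.swap_apply_right]
  have ks : κ s = q := by
    simp only [hκ, kappaE, tau0e, tau2e, Equiv.Perm.mul_apply]
    rw [Equiv.swap_apply_right, Equiv.swap_apply_of_ne_of_ne hpr.symm hqr.symm,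
      Equiv.swap_apply_right, Equiv.swap_apply_of_ne_of_ne hpq.symm hqs]
  have kfix : ∀ z, z ≠ p → z ≠ q → z ≠ r → z ≠ s → κ z = z := by
    intro z h1 h2 h3 h4
    simp only [hκ, kappaE, tau0e, tau2e, Equiv.Perm.mul_apply]
    rw [Equiv.swap_apply_of_ne_of_ne h3 h4, Equiv.swap_apply_of_ne_of_ne h1 h2,
      Equiv.swap_apply_of_ne_of_ne h2 h3, Equiv.swap_apply_of_ne_of_ne h1 h4]
  -- a := τ₀ * κ acts like τ₂ on {p,q,r,s} and like τ₀ elsewhere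
  have hap : (τ₀ * κ) p = τ₂ p := by rw [Equiv.Perm.mul_apply, kp, t0r, e2p]
  have haq : (τ₀ * κ) q = τ₂ q := by rw [Equiv.Perm.mul_apply, kq, t0s, t2q]
  have har : (τ₀ * κ) r = τ₂ r := by rw [Equiv.Perm.mul_apply, kr, e0p, e2r]
  have has : (τ₀ * κ) s = τ₂ s := by rw [Equiv.Perm.mul_apply, ks, e0q, t2s]
  have haz : ∀ z, z ≠ p → z ≠ q → z ≠ r → z ≠ s → (τ₀ * κ) z = τ₀ z := by
    intro z h1 h2 h3 h4; rw [Equiv.Perm.mul_apply, kfix z h1 h2 h3 h4]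
  -- c := τ₂ * κ acts like τ₀ on {p,q,r,s} and like τ₂ elsewhere
  have hcp : (τ₂ * κ) p = τ₀ p := by rw [Equiv.Perm.mul_apply, kp, e2r, e0p]
  have hcq : (τ₂ * κ) q = τ₀ q := by rw [Equiv.Perm.mul_apply, kq, t2s, e0q]
  have hcr : (τ₂ * κ) r = τ₀ r := by rw [Equiv.Perm.mul_apply, kr, e2p, t0r]
  have hcs : (τ₂ * κ) s = τ₀ s := by rw [Equiv.Perm.mul_apply, ks, t2q, t0s]
  have hcz : ∀ z, z ≠ p → z ≠ q → z ≠ r → z ≠ s → (τ₂ * κ) z = τ₂ z := by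
    intro z h1 h2 h3 h4; rw [Equiv.Perm.mul_apply, kfix z h1 h2 h3 h4]
  set S : Set (Equiv.Perm X) := {τ₀ * κ, τ₁, τ₂ * κ} with hS
  set T : Set (Equiv.Perm X) := {τ₀, τ₁, τ₂} with hT
  have mem_orb : ∀ (H : Subgroup (Equiv.Perm X)) (g : Equiv.Perm X), g ∈ H →
      ∀ z : X, g z ∈ MulAction.orbit H z := fun H g hg z => ⟨⟨g, hg⟩, rfl⟩
  have haS : τ₀ * κ ∈ Subgroup.closure S := Subgroup.subset_closure (by simp [hS])
  have h1S : τ₁ ∈ Subgroup.closure S := Subgroup.subset_closure (by simp [hS])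
  have hcS : τ₂ * κ ∈ Subgroup.closure S := Subgroup.subset_closure (by simp [hS])
  have h0T : τ₀ ∈ Subgroup.closure T := Subgroup.subset_closure (by simp [hT])
  have h1T : τ₁ ∈ Subgroup.closure T := Subgroup.subset_closure (by simp [hT])
  have h2T : τ₂ ∈ Subgroup.closure T := Subgroup.subset_closure (by simp [hT])
  apply Set.eq_of_subset_of_subset
  · -- orbit of closure S ⊆ orbit of closure T
    apply orbit_closure_subset_aux
    intro g hg z
    have hgsmul : g • z = g z := rfl
    rw [hgsmul]
    rcases hg with rfl | rfl | rfl
    · -- g = τ₀ * κ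
      by_cases h1 : z = p
      · subst h1; rw [hap]; exact mem_orb _ _ h2T _
      by_cases h2 : z = q
      · subst h2; rw [haq]; exact mem_orb _ _ h2T _
      by_cases h3 : z = r
      · subst h3; rw [har]; exact mem_orb _ _ h2T _
      by_cases h4 : z = s
      · subst h4; rw [has]; exact mem_orb _ _ h2T _
      · rw [haz z h1 h2 h3 h4]; exact mem_orb _ _ h0T _
    · exact mem_orb _ _ h1T _
    · -- g = τ₂ * κ
      by_cases h1 : z = p
      · subst h1; rw [hcp]; exact mem_orb _ _ h0T _
      by_cases h2 : z = q
      · subst h2; rw [hcq]; exact mem_orb _ _ h0T _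
      by_cases h3 : z = r
      · subst h3; rw [hcr]; exact mem_orb _ _ h0T _
      by_cases h4 : z = s
      · subst h4; rw [hcs]; exact mem_orb _ _ h0T _
      · rw [hcz z h1 h2 h3 h4]; exact mem_orb _ _ h2T _
  · -- orbit of closure T ⊆ orbit of closure S
    apply orbit_closure_subset_aux
    intro g hg z
    have hgsmul : g • z = g z := rfl
    rw [hgsmul]
    rcases hg with rfl | rfl | rfl
    · -- g = τ₀
      by_cases h1 : z = p
      · subst h1; rw [← hcp]; exact mem_orb _ _ hcS _
      by_cases h2 : z = q
      · subst h2; rw [← hcq]; exact mem_orb _ _ hcS _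
      by_cases h3 : z = r
      · subst h3; rw [← hcr]; exact mem_orb _ _ hcS _
      by_cases h4 : z = s
      · subst h4; rw [← hcs]; exact mem_orb _ _ hcS _
      · rw [← haz z h1 h2 h3 h4]; exact mem_orb _ _ haS _
    · exact mem_orb _ _ h1S _
    · -- g = τ₂
      by_cases h1 : z = p
      · subst h1; rw [← hap]; exact mem_orb _ _ haS _
      by_cases h2 : z = q
      · subst h2; rw [← haq]; exact mem_orb _ _ haS _
      by_cases h3 : z = r
      · subst h3; rw [← har]; exact mem_orb _ _ haS _
      by_cases h4 : z = s
      · subst h4; rw [← has]; exact mem_orb _ _ haS _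
      · rw [← hcz z h1 h2 h3 h4]; exact mem_orb _ _ hcS _
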